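/- Let [K] and [K'] be two naturally oriented n-simplices in ℝ^n (i.e. oriented so that the determinant of edge vectors from the first vertex is positive) that share a common facet but have disjoint interiors. Then [K] and [K'] are consistently oriented. -/

import Mathlib

/-- An oriented abstract simplex: a tuple of vertices together with a sign. Two such data
represent the same orientation when they differ by an even permutation (and equal signs),
or by an odd permutation and opposite signs. -/
structure OSimplex (V : Type*) (d : ℕ) where
  vert : Fin (d + 1) → V
  sign : ℤˣ

namespace OSimplex

variable {V : Type*} {d : ℕ}

/-- `s` and `t` define the same oriented simplex. -/
def Equiv' (s t : OSimplex V d) : Prop :=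
  ∃ σ : Equiv.Perm (Fin (d + 1)), s.vert = t.vert ∘ σ ∧ s.sign = Equiv.Perm.sign σ * t.sign

/-- The oppositely oriented simplex. -/
def opp (s : OSimplex V d) : OSimplex V d := ⟨s.vert, -s.sign⟩

/-- The oriented facet of `s` obtained by deleting the vertex in position `j`,
with the induced orientation `(-1)^j [V_0,…,V̂_j,…,V_{d+1}]`. -/
def facet (s : OSimplex V (d + 1)) (j : Fin (d + 2)) : OSimplex V d :=
  ⟨s.vert ∘ j.succAbove, (-1 : ℤˣ) ^ (j : ℕ) * s.sign⟩

/-- `s` and `t` induce opposite orientations on their common facet with vertex set `F`. -/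
def ConsistentAt (s t : OSimplex V (d + 1)) (F : Set V) : Prop :=
  ∃ j j' : Fin (d + 2), Set.range (s.facet j).vert = F ∧ Set.range (t.facet j').vert = F ∧
    (s.facet j).Equiv' ((t.facet j').opp)

/-- `s` and `t` are consistently oriented: they induce opposite orientations on a common
facet. -/
def Consistent (s t : OSimplex V (d + 1)) : Prop := ∃ F : Set V, ConsistentAt s t F

end OSimplex
/-- The natural orientation of an `n`-simplex in `ℝ^n`: the sign matches the sign of the
determinant of the edge vectors issued from the first vertex. -/
def NaturallyOriented {n : ℕ} (s : OSimplex (Fin (n + 1) → ℝ) (n + 1)) : Prop :=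
  0 < ((s.sign : ℤ) : ℝ) *
    Matrix.det (Matrix.of fun i j : Fin (n + 1) => (s.vert i.succ - s.vert 0) j)


namespace Stmt1Aux

open Matrix Finset Filter Set


variable {m : ℕ}

/-- Determinant of the `(m+2) × (m+2)` matrix whose rows are `(1, u r)`. -/
noncomputable def Ddet (u : Fin (m + 2) → (Fin (m + 1) → ℝ)) : ℝ :=
  (Matrix.of fun r : Fin (m + 2) => Fin.cons (1 : ℝ) (u r)).det

lemma Ddet_comp_perm (u : Fin (m + 2) → (Fin (m + 1) → ℝ)) (σ : Equiv.Perm (Fin (m + 2))) :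
    Ddet (u ∘ σ) = ((Equiv.Perm.sign σ : ℤ) : ℝ) * Ddet u := by
  have h : (Matrix.of fun r : Fin (m + 2) => Fin.cons (1 : ℝ) ((u ∘ σ) r)) =
      (Matrix.of fun r : Fin (m + 2) => Fin.cons (1 : ℝ) (u r)).submatrix σ id := rfl
  rw [Ddet, h, Matrix.det_permute, Ddet]

lemma Ddet_eq_det_edges (u : Fin (m + 2) → (Fin (m + 1) → ℝ)) :
    Ddet u = Matrix.det (Matrix.of fun i j : Fin (m + 1) => (u i.succ - u 0) j) := by
  set B : Matrix (Fin (m + 2)) (Fin (m + 2)) ℝ :=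
    Matrix.of (Fin.cons (Fin.cons 1 (u 0)) fun i => Fin.cons 0 (u i.succ - u 0)) with hB
  have h1 : Ddet u = B.det := by
    rw [Ddet]
    refine Matrix.det_eq_of_forall_row_eq_smul_add_const
      (fun i : Fin (m + 2) => if i = 0 then 0 else 1) 0 ?_ ?_
    · simp
    intro i j
    refine Fin.cases ?_ (fun i => ?_) i <;> refine Fin.cases ?_ (fun j => ?_) j <;>
      simp [B, Fin.succ_ne_zero] <;> ring
  rw [h1, Matrix.det_succ_column_zero, Fin.sum_univ_succ]
  have h0 : ∀ i : Fin (m + 1), B i.succ 0 = 0 := fun i => rfl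
  simp only [h0, mul_zero, zero_mul, Finset.sum_const_zero, add_zero]
  have h2 : B 0 0 = 1 := rfl
  rw [h2]
  simp only [Fin.val_zero, pow_zero, one_mul, mul_one]
  congr 1

lemma Ddet_cons_eq (u : Fin (m + 2) → (Fin (m + 1) → ℝ)) (i : Fin (m + 2)) :
    Ddet (Fin.cons (u i) (u ∘ i.succAbove)) = (-1 : ℝ) ^ (i : ℕ) * Ddet u := by
  have h0 : i.cycleRange⁻¹ 0 = i := by
    conv_lhs => rw [← Fin.cycleRange_self i]
    exact Equiv.symm_apply_apply _ _
  have hs : ∀ k : Fin (m + 1), i.cycleRange⁻¹ k.succ = i.succAbove k := by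
    intro k
    conv_lhs => rw [← Fin.cycleRange_succAbove i k]
    exact Equiv.symm_apply_apply _ _
  have h : Fin.cons (u i) (u ∘ i.succAbove) = u ∘ ⇑(i.cycleRange⁻¹) := by
    funext k
    refine Fin.cases ?_ (fun k => ?_) k
    · simp [h0]
    · simp [hs k]
  rw [h, Ddet_comp_perm]
  congr 1
  rw [map_inv, Fin.sign_cycleRange]
  push_cast
  simp

lemma Ddet_cons_comp (A : Fin (m + 1) → ℝ) (F : Fin (m + 1) → (Fin (m + 1) → ℝ))
    (σ : Equiv.Perm (Fin (m + 1))) :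
    Ddet (Fin.cons A (F ∘ σ)) = ((Equiv.Perm.sign σ : ℤ) : ℝ) * Ddet (Fin.cons A F) := by
  have h : Fin.cons A (F ∘ σ) = Fin.cons A F ∘ ⇑(Equiv.Perm.decomposeFin.symm (0, σ)) := by
    funext k
    refine Fin.cases ?_ (fun k => ?_) k
    · simp
    · simp [Equiv.Perm.decomposeFin_symm_apply_succ]
  rw [h, Ddet_comp_perm, Equiv.Perm.decomposeFin.symm_sign]
  simp

lemma Ddet_update (b : AffineBasis (Fin (m + 2)) ℝ (Fin (m + 1) → ℝ)) (i : Fin (m + 2))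
    (x : Fin (m + 1) → ℝ) :
    Ddet (Function.update (⇑b) i x) = b.coord i x * Ddet ⇑b := by
  classical
  set M : Matrix (Fin (m + 2)) (Fin (m + 2)) ℝ :=
    Matrix.of fun r => Fin.cons (1 : ℝ) (b r) with hM
  have hrow : (Matrix.of fun r => Fin.cons (1 : ℝ) (Function.update (⇑b) i x r)) =
      M.updateRow i (Fin.cons 1 x) := by
    funext r c
    by_cases h : r = i
    · subst h; simp [M]
    · simp [M, Matrix.updateRow_ne h, Function.update_of_ne h]
  have hx : Fin.cons (1 : ℝ) x = ∑ j, b.coord j x • M j := by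
    funext c
    rw [Finset.sum_apply]
    refine Fin.cases ?_ (fun c => ?_) c
    · simpa [M] using (b.sum_coord_apply_eq_one x).symm
    · have h := congrFun (b.linear_combination_coord_eq_self x) c
      rw [Finset.sum_apply] at h
      simpa [M] using h.symm
  rw [Ddet, hrow, hx, Matrix.det_updateRow_sum]
  rfl



variable {m : ℕ}

lemma coord_centroid (b : AffineBasis (Fin (m + 2)) ℝ (Fin (m + 1) → ℝ))
    (e : Fin (m + 1) → Fin (m + 2)) (he : Function.Injective e) (j : Fin (m + 2)) :
    b.coord j (Finset.univ.centroid ℝ (⇑b ∘ e)) =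
      if j ∈ Set.range e then (((m : ℕ) + 1 : ℝ))⁻¹ else 0 := by
  classical
  have hone : ∑ k : Fin (m + 1), (Finset.univ.centroidWeights ℝ) k = 1 :=
    Finset.univ.sum_centroidWeights_eq_one_of_nonempty ℝ Finset.univ_nonempty
  rw [Finset.centroid_def, Finset.univ.map_affineCombination (⇑b ∘ e) _ hone (b.coord j),
    Finset.univ.affineCombination_eq_linear_combination _ _ hone]
  simp only [Function.comp_apply, Finset.centroidWeights_apply, Finset.card_univ,
    Fintype.card_fin, smul_eq_mul, AffineBasis.coord_apply]
  by_cases hj : j ∈ Set.range e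
  · rw [if_pos hj]
    obtain ⟨k₀, rfl⟩ := hj
    rw [Finset.sum_eq_single k₀]
    · simp
    · intro k _ hk
      have : e k₀ ≠ e k := fun h => hk (he h.symm)
      simp [this]
    · intro h; exact absurd (Finset.mem_univ k₀) h
  · rw [if_neg hj]
    apply Finset.sum_eq_zero
    intro k _
    have : j ≠ e k := fun h => hj ⟨k, h.symm⟩
    simp [this]

lemma ev_pos {cb ca : ℝ} (h : 0 < cb ∨ (cb = 0 ∧ 0 < ca)) :
    ∀ᶠ ε in nhdsWithin (0 : ℝ) (Set.Ioi 0), 0 < (1 - ε) * cb + ε * ca := by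
  rcases h with h | ⟨h0, hpos⟩
  · have hcont : Filter.Tendsto (fun ε : ℝ => (1 - ε) * cb + ε * ca) (nhds 0)
        (nhds ((1 - 0) * cb + 0 * ca)) := by
      apply Continuous.tendsto
      fun_prop
    have he : (1 - (0 : ℝ)) * cb + 0 * ca = cb := by ring
    rw [he] at hcont
    exact (hcont.eventually_const_lt h).filter_mono nhdsWithin_le_nhds
  · subst h0
    filter_upwards [self_mem_nhdsWithin] with ε hε
    have hε' : (0 : ℝ) < ε := hε
    nlinarith



variable {m : ℕ}

lemma coord_apex_neg (b b' : AffineBasis (Fin (m + 2)) ℝ (Fin (m + 1) → ℝ))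
    (i i' : Fin (m + 2)) (σ : Equiv.Perm (Fin (m + 1)))
    (hfac : ∀ k, b (i.succAbove k) = b' (i'.succAbove (σ k)))
    (hdisj : interior (convexHull ℝ (Set.range ⇑b)) ∩
      interior (convexHull ℝ (Set.range ⇑b')) = ∅) :
    b'.coord i' (b i) < 0 := by
  classical
  have hfe : ⇑b ∘ i.succAbove = (⇑b' ∘ i'.succAbove) ∘ ⇑σ := funext fun k => hfac k
  have hrange : Set.range (⇑b' ∘ i'.succAbove) = Set.range (⇑b ∘ i.succAbove) := by
    rw [hfe, Set.range_comp ((⇑b' ∘ i'.succAbove)) ⇑σ, Set.range_eq_univ.2 σ.surjective,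
      Set.image_univ]
  -- b i is not in the affine span of the common facet
  have hnot : b i ∉ affineSpan ℝ (Set.range (⇑b ∘ i.succAbove)) := by
    have h1 : Set.range (⇑b ∘ i.succAbove) = ⇑b '' (Set.univ \ {i}) := by
      rw [Set.range_comp, Fin.range_succAbove]
      congr 1
      ext j
      simp
    rw [h1]
    exact b.ind.notMem_affineSpan_diff i Set.univ
  -- the coordinate is nonzero
  have hne : b'.coord i' (b i) ≠ 0 := by
    intro h0
    have hsum : ∑ k : Fin (m + 1), b'.coord (i'.succAbove k) (b i) = 1 := by
      have h1 := b'.sum_coord_apply_eq_one (b i)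
      rw [Fin.sum_univ_succAbove _ i', h0, zero_add] at h1
      exact h1
    have heq : b i = Finset.univ.affineCombination ℝ (⇑b' ∘ i'.succAbove)
        (fun k => b'.coord (i'.succAbove k) (b i)) := by
      rw [Finset.univ.affineCombination_eq_linear_combination _ _ hsum]
      have h2 := b'.linear_combination_coord_eq_self (b i)
      rw [Fin.sum_univ_succAbove _ i', h0, zero_smul, zero_add] at h2
      exact h2.symm
    have hmem : b i ∈ affineSpan ℝ (Set.range (⇑b' ∘ i'.succAbove)) := by
      rw [heq]
      exact affineCombination_mem_affineSpan hsum _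
    rw [hrange] at hmem
    exact hnot hmem
  rcases hne.lt_or_gt with hneg | hpos
  · exact hneg
  exfalso
  -- the centroid of the common facet
  set p := Finset.univ.centroid ℝ (⇑b ∘ i.succAbove) with hp
  have hp' : p = Finset.univ.centroid ℝ (⇑b' ∘ i'.succAbove) := by
    rw [hp, hfe,
      show ((⇑b' ∘ i'.succAbove) ∘ ⇑σ) = ((⇑b' ∘ i'.succAbove) ∘ ⇑σ.toEmbedding) from rfl,
      ← Finset.centroid_map (k := ℝ) (e := σ.toEmbedding), Finset.map_univ_equiv]
  set Q : ℝ → (Fin (m + 1) → ℝ) := fun ε => AffineMap.lineMap p (b i) ε with hQ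
  have hline : ∀ (c : AffineBasis (Fin (m + 2)) ℝ (Fin (m + 1) → ℝ)) (j : Fin (m + 2)) (ε : ℝ),
      c.coord j (Q ε) = (1 - ε) * c.coord j p + ε * c.coord j (b i) := by
    intro c j ε
    rw [hQ]
    simp only [AffineMap.apply_lineMap]
    rw [AffineMap.lineMap_apply_module]
    simp [smul_eq_mul]
  have hmpos : (0 : ℝ) < (((m : ℕ) + 1 : ℝ))⁻¹ := by positivity
  have hev : ∀ᶠ ε in nhdsWithin (0 : ℝ) (Set.Ioi 0),
      (∀ j, 0 < b.coord j (Q ε)) ∧ (∀ j, 0 < b'.coord j (Q ε)) := by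
    apply Filter.Eventually.and <;> rw [Filter.eventually_all] <;> intro j
    · have hcp : b.coord j p = if j ∈ Set.range i.succAbove then (((m : ℕ) + 1 : ℝ))⁻¹ else 0 :=
        coord_centroid b i.succAbove (Fin.succAbove_right_injective) j
      simp only [hline b j]
      by_cases hji : j = i
      · subst hji
        have h1 : b.coord j p = 0 := by
          rw [hcp, if_neg]
          rw [Fin.range_succAbove]
          simp
        have h2 : b.coord j (b j) = 1 := b.coord_apply_eq j
        rw [h1, h2]
        exact ev_pos (Or.inr ⟨rfl, one_pos⟩)
      · have h1 : b.coord j p = (((m : ℕ) + 1 : ℝ))⁻¹ := by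
          rw [hcp, if_pos]
          rw [Fin.range_succAbove]
          simpa using hji
        rw [h1]
        exact ev_pos (Or.inl hmpos)
    · have hcp : b'.coord j p = if j ∈ Set.range i'.succAbove then (((m : ℕ) + 1 : ℝ))⁻¹ else 0 := by
        rw [hp']
        exact coord_centroid b' i'.succAbove (Fin.succAbove_right_injective) j
      simp only [hline b' j]
      by_cases hji : j = i'
      · subst hji
        have h1 : b'.coord j p = 0 := by
          rw [hcp, if_neg]
          rw [Fin.range_succAbove]
          simp
        rw [h1]
        exact ev_pos (Or.inr ⟨rfl, hpos⟩)
      · have h1 : b'.coord j p = (((m : ℕ) + 1 : ℝ))⁻¹ := by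
          rw [hcp, if_pos]
          rw [Fin.range_succAbove]
          simpa using hji
        rw [h1]
        exact ev_pos (Or.inl hmpos)
  obtain ⟨ε, h1, h2⟩ := hev.exists
  have hm1 : Q ε ∈ interior (convexHull ℝ (Set.range ⇑b)) := by
    rw [b.interior_convexHull]
    exact h1
  have hm2 : Q ε ∈ interior (convexHull ℝ (Set.range ⇑b')) := by
    rw [b'.interior_convexHull]
    exact h2
  rw [Set.eq_empty_iff_forall_notMem] at hdisj
  exact hdisj (Q ε) ⟨hm1, hm2⟩


end Stmt1Aux

/-- Two naturally oriented `n`-simplices in `ℝ^n` (`n = m + 1`) that share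
a facet but have disjoint interiors are consistently oriented: they induce opposite
orientations on any common facet. -/
theorem stmt1 {m : ℕ} (K K' : OSimplex (Fin (m + 1) → ℝ) (m + 1))
    (hK : AffineIndependent ℝ K.vert) (hK' : AffineIndependent ℝ K'.vert)
    (hnatK : NaturallyOriented K) (hnatK' : NaturallyOriented K')
    (hshare : ∃ i i', Set.range (K.facet i).vert = Set.range (K'.facet i').vert)
    (hdisj : interior (convexHull ℝ (Set.range K.vert)) ∩
      interior (convexHull ℝ (Set.range K'.vert)) = ∅) :
    ∀ i i', Set.range (K.facet i).vert = Set.range (K'.facet i').vert →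
      OSimplex.ConsistentAt K K' (Set.range (K.facet i).vert) := by
  intro i i' hrange
  classical
  clear hshare
  -- affine bases given by the two simplices
  have htopK : affineSpan ℝ (Set.range K.vert) = ⊤ := by
    rw [hK.affineSpan_eq_top_iff_card_eq_finrank_add_one]
    simp [Module.finrank_fintype_fun_eq_card]
  have htopK' : affineSpan ℝ (Set.range K'.vert) = ⊤ := by
    rw [hK'.affineSpan_eq_top_iff_card_eq_finrank_add_one]
    simp [Module.finrank_fintype_fun_eq_card]
  set b : AffineBasis (Fin (m + 2)) ℝ (Fin (m + 1) → ℝ) := ⟨K.vert, hK, htopK⟩ with hbdef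
  set b' : AffineBasis (Fin (m + 2)) ℝ (Fin (m + 1) → ℝ) := ⟨K'.vert, hK', htopK'⟩ with hb'def
  have hcoeb : ⇑b = K.vert := rfl
  have hcoeb' : ⇑b' = K'.vert := rfl
  -- the permutation matching the two parametrizations of the common facet
  set f : Fin (m + 1) → (Fin (m + 1) → ℝ) := K.vert ∘ i.succAbove with hfdef
  set g : Fin (m + 1) → (Fin (m + 1) → ℝ) := K'.vert ∘ i'.succAbove with hgdef
  have hfinj : Function.Injective f := hK.injective.comp Fin.succAbove_right_injective
  have hginj : Function.Injective g := hK'.injective.comp Fin.succAbove_right_injective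
  have hrfg : Set.range f = Set.range g := hrange
  set σ : Equiv.Perm (Fin (m + 1)) :=
    (Equiv.ofInjective f hfinj).trans
      ((Equiv.setCongr hrfg).trans (Equiv.ofInjective g hginj).symm) with hσdef
  have hσ : ∀ k, g (σ k) = f k := by
    intro k
    simp only [hσdef, Equiv.trans_apply]
    rw [Equiv.apply_ofInjective_symm hginj]
    rfl
  -- the apex of `K` has negative `i'`-th coordinate w.r.t. `K'`
  have hAneg : b'.coord i' (K.vert i) < 0 := by
    refine Stmt1Aux.coord_apex_neg b b' i i' σ (fun k => (hσ k).symm) ?_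
    rw [hcoeb, hcoeb']
    exact hdisj
  -- determinant bookkeeping
  set A : Fin (m + 1) → ℝ := K.vert i with hAdef
  set DW : ℝ := Stmt1Aux.Ddet K.vert with hDWdef
  set DW' : ℝ := Stmt1Aux.Ddet K'.vert with hDW'def
  set x : ℝ := ((K.sign : ℤ) : ℝ) with hxdef
  set x' : ℝ := ((K'.sign : ℤ) : ℝ) with hx'def
  have hnK : 0 < x * DW := by
    rw [hDWdef, Stmt1Aux.Ddet_eq_det_edges]
    exact hnatK
  have hnK' : 0 < x' * DW' := by
    rw [hDW'def, Stmt1Aux.Ddet_eq_det_edges]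
    exact hnatK'
  set e : ℝ := (-1 : ℝ) ^ (i : ℕ) with hedef
  set e' : ℝ := (-1 : ℝ) ^ (i' : ℕ) with he'def
  set s : ℝ := ((Equiv.Perm.sign σ : ℤ) : ℝ) with hsdef
  have hss : s * s = 1 := by
    rcases Int.units_eq_one_or (Equiv.Perm.sign σ) with h | h <;> rw [hsdef, h] <;> norm_num
  have hee : e' * e' = 1 := by
    rw [he'def, ← pow_add]
    exact Even.neg_one_pow ⟨(i' : ℕ), rfl⟩
  set c : ℝ := b'.coord i' A with hcdef
  set U : ℝ := Stmt1Aux.Ddet (Function.update K'.vert i' A) with hUdef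
  set X : ℝ := Stmt1Aux.Ddet (Fin.cons A g) with hXdef
  set Y : ℝ := Stmt1Aux.Ddet (Fin.cons A f) with hYdef
  have h1 : U = c * DW' := by
    rw [hUdef, hcdef, hDW'def, ← hcoeb']
    exact Stmt1Aux.Ddet_update b' i' A
  have h2 : X = e' * U := by
    have hup1 : Function.update K'.vert i' A i' = A := Function.update_self i' A K'.vert
    have hup2 : Function.update K'.vert i' A ∘ i'.succAbove = g := by
      funext k
      exact Function.update_of_ne (Fin.succAbove_ne i' k) A K'.vert
    have h := Stmt1Aux.Ddet_cons_eq (Function.update K'.vert i' A) i'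
    rw [hup1, hup2] at h
    exact h
  have h3 : Y = e * DW := Stmt1Aux.Ddet_cons_eq K.vert i
  have h5 : Y = s * X := by
    have h := Stmt1Aux.Ddet_cons_comp A g σ
    have hgs : g ∘ ⇑σ = f := funext fun k => hσ k
    rw [hgs] at h
    exact h
  have key : c * DW' = e' * s * e * DW := by
    have hU : U = e' * X := by rw [h2, ← mul_assoc, hee, one_mul]
    have hX : X = s * Y := by rw [h5, ← mul_assoc, hss, one_mul]
    calc c * DW' = U := h1.symm
      _ = e' * X := hU
      _ = e' * (s * (e * DW)) := by rw [hX, h3]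
      _ = e' * s * e * DW := by ring
  have hDW0 : DW ≠ 0 := by
    intro h
    rw [h, mul_zero] at hnK
    exact lt_irrefl 0 hnK
  have h6 : (e * e' * s * x * x') * (DW * DW) = c * ((x * DW) * (x' * DW')) := by
    linear_combination (-(x * x' * DW)) * key
  have h7 : c * ((x * DW) * (x' * DW')) < 0 :=
    mul_neg_of_neg_of_pos hAneg (mul_pos hnK hnK')
  have hsq : 0 < DW * DW := mul_self_pos.mpr hDW0
  have hr : e * e' * s * x * x' < 0 := by
    by_contra hcon
    push_neg at hcon
    have h8 := mul_nonneg hcon (le_of_lt hsq)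
    rw [h6] at h8
    exact absurd h7 (not_lt.mpr h8)
  -- each sign factor squares to `1`
  have hee2 : e * e = 1 := by
    rw [hedef, ← pow_add]
    exact Even.neg_one_pow ⟨(i : ℕ), rfl⟩
  have hxx : x * x = 1 := by
    rw [hxdef]
    have h := congrArg (fun u : ℤˣ => ((u : ℤ) : ℝ)) (Int.units_mul_self K.sign)
    push_cast at h
    simpa using h
  have hxx' : x' * x' = 1 := by
    rw [hx'def]
    have h := congrArg (fun u : ℤˣ => ((u : ℤ) : ℝ)) (Int.units_mul_self K'.sign)
    push_cast at h
    simpa using h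
  have hp2 : (e * e' * s * x * x') * (e * e' * s * x * x') = 1 := by
    have hre : (e * e' * s * x * x') * (e * e' * s * x * x') =
        (e * e) * ((e' * e') * ((s * s) * ((x * x) * (x' * x')))) := by ring
    rw [hre, hee2, hee, hss, hxx, hxx']
    norm_num
  have hfac0 : ((e * e' * s * x * x') + 1) * ((e * e' * s * x * x') - 1) = 0 := by
    linear_combination hp2
  have hprod : e * e' * s * x * x' = -1 := by
    rcases mul_eq_zero.mp hfac0 with h | h
    · linarith
    · exfalso
      have h9 : e * e' * s * x * x' = 1 := by linarith
      rw [h9] at hr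
      norm_num at hr
  -- the real-number form of the sign identity
  have k1 : (e * e' * s * x * x') * (e' * s * x') = -1 * (e' * s * x') := by rw [hprod]
  have k2 : e * x = -(e' * s * x') := by
    have h9 : (e * x) * ((e' * e') * ((s * s) * (x' * x'))) = -(e' * s * x') := by
      linear_combination k1
    rw [hee, hss, hxx'] at h9
    simpa using h9
  have k3 : e * x = s * (-(e' * x')) := by rw [k2]; ring
  rw [hedef, he'def, hsdef, hxdef, hx'def] at k3
  -- lift back to `ℤˣ`
  refine ⟨i, i', rfl, hrange.symm, σ, funext fun k => (hσ k).symm, ?_⟩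
  show (-1 : ℤˣ) ^ (i : ℕ) * K.sign = Equiv.Perm.sign σ * (-((-1 : ℤˣ) ^ (i' : ℕ) * K'.sign))
  refine Units.ext (Int.cast_injective (α := ℝ) ?_)
  push_cast
  exact k3
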